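/- Let L ⊂ ℝ^{k−1} be the lattice generated by the standard basis vectors e₁, …, e_{k−2} and the vector (a₂, …, a_{k−1}, ε), where 0 = a₁ < a₂ < … < a_{k−1} < a_k = 1 and ε > 0. If b₁ is a nonzero vector of L satisfying |b₁|² ≤ 2^{k−2}·|x|² for all nonzero x ∈ L, then for every positive integer q' with q'·ε < 2^{1−k/2}·|b₁|/√k and all integers p₂', …, p_{k−1}', one has max_{2≤i≤k−1} |pᵢ' − q'·aᵢ| ≥ 2^{1−k/2}·|b₁|/√k. -/

import Mathlib

/-- Theorem 2.5 (first part): if `b₁` is a nonzero lattice vector of the LLL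
lattice `L` with `‖b₁‖² ≤ 2^{k-2}‖x‖²` for all nonzero `x ∈ L`, then any `q'`
with `q'ε` below the threshold approximates badly:
`max_{2≤i≤k-1} |pᵢ' - q'aᵢ| ≥ 2^{1-k/2}‖b₁‖/√k`. -/
theorem lll_lower_bound (k : ℕ) (hk : 3 ≤ k) (a : Fin k → ℝ) (hmono : StrictMono a)
    (h0 : a ⟨0, by omega⟩ = 0) (h1 : a ⟨k - 1, by omega⟩ = 1)
    (ε : ℝ) (hε : 0 < ε)
    (v : EuclideanSpace ℝ (Fin (k - 1)))
    (hv : ∀ j : Fin (k - 1), v j =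
      if h : (j : ℕ) + 1 < k - 1 then a ⟨(j : ℕ) + 1, by omega⟩ else ε)
    (L : Submodule ℤ (EuclideanSpace ℝ (Fin (k - 1))))
    (hL : L = Submodule.span ℤ
      (insert v {x | ∃ i : Fin (k - 1), (i : ℕ) < k - 2 ∧ x = EuclideanSpace.single i (1 : ℝ)}))
    (b₁ : EuclideanSpace ℝ (Fin (k - 1))) (hb₁L : b₁ ∈ L) (hb₁ : b₁ ≠ 0)
    (hshort : ∀ x ∈ L, x ≠ 0 → ‖b₁‖ ^ 2 ≤ (2 : ℝ) ^ (k - 2) * ‖x‖ ^ 2)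
    (q' : ℕ) (hq' : 0 < q')
    (hsmall : (q' : ℝ) * ε < (2 : ℝ) ^ ((1 : ℝ) - (k : ℝ) / 2) * ‖b₁‖ / Real.sqrt k)
    (p : Fin k → ℤ) :
    ∃ i : Fin k, 0 < (i : ℕ) ∧ (i : ℕ) < k - 1 ∧
      |(p i : ℝ) - (q' : ℝ) * a i| ≥ (2 : ℝ) ^ ((1 : ℝ) - (k : ℝ) / 2) * ‖b₁‖ / Real.sqrt k := by
  by_contra hcon
  push_neg at hcon
  have hb : (0:ℝ) < ‖b₁‖ := norm_pos_iff.mpr hb₁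
  have hkR : (0:ℝ) < (k:ℝ) := by positivity
  set T : ℝ := (2 : ℝ) ^ ((1 : ℝ) - (k : ℝ) / 2) * ‖b₁‖ / Real.sqrt k with hT
  have hTpos : 0 < T :=
    div_pos (mul_pos (Real.rpow_pos_of_pos two_pos _) hb) (Real.sqrt_pos.mpr hkR)
  -- define the lattice vector x
  set x : EuclideanSpace ℝ (Fin (k-1)) := WithLp.toLp 2 (fun j : Fin (k-1) =>
      if h : (j:ℕ)+1 < k-1 then (p ⟨(j:ℕ)+1, by omega⟩ : ℝ) - (q':ℝ) * a ⟨(j:ℕ)+1, by omega⟩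
      else -((q':ℝ)*ε)) with hxdef
  have hxcoord : ∀ j : Fin (k-1), x j =
      if h : (j:ℕ)+1 < k-1 then (p ⟨(j:ℕ)+1, by omega⟩ : ℝ) - (q':ℝ) * a ⟨(j:ℕ)+1, by omega⟩
      else -((q':ℝ)*ε) := fun j => rfl
  -- x ∈ L
  have hxL : x ∈ L := by
    have hsum_apply : ∀ (f : Fin (k-1) → EuclideanSpace ℝ (Fin (k-1))) (i : Fin (k-1)),
        (∑ j : Fin (k-1), f j) i = ∑ j : Fin (k-1), f j i := by
      intro f i
      exact map_sum (EuclideanSpace.proj (𝕜 := ℝ) i) f Finset.univ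
    have hxe : x = (∑ j : Fin (k-1),
        (if h : (j:ℕ)+1 < k-1 then p ⟨(j:ℕ)+1, by omega⟩ else 0 : ℤ) • EuclideanSpace.single j (1:ℝ))
        + (-(q':ℤ)) • v := by
      ext i
      rw [PiLp.add_apply, hsum_apply]
      have hterm : ∀ j : Fin (k-1),
          ((if h : (j:ℕ)+1 < k-1 then p ⟨(j:ℕ)+1, by omega⟩ else 0 : ℤ) • EuclideanSpace.single j (1:ℝ)) i
          = if i = j then ((if h : (j:ℕ)+1 < k-1 then p ⟨(j:ℕ)+1, by omega⟩ else 0 : ℤ) : ℝ) else 0 := by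
        intro j
        rw [PiLp.smul_apply, EuclideanSpace.single_apply]
        by_cases hij : i = j <;> simp [hij, apply_dite (Int.cast : ℤ → ℝ)]
      simp only [hterm]
      rw [Finset.sum_ite_eq Finset.univ i
        (fun j => ((if h : (j:ℕ)+1 < k-1 then p ⟨(j:ℕ)+1, by omega⟩ else 0 : ℤ) : ℝ))]
      rw [if_pos (Finset.mem_univ i), PiLp.smul_apply, hxcoord, hv]
      by_cases h : (i:ℕ)+1 < k-1
      · simp only [h, dif_pos, zsmul_eq_mul]
        push_cast
        ring
      · simp only [h, dif_neg, not_false_iff, zsmul_eq_mul]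
        push_cast
        ring
    rw [hxe, hL]
    apply Submodule.add_mem
    · apply Submodule.sum_mem
      intro j _
      by_cases h : (j:ℕ)+1 < k-1
      · apply Submodule.smul_mem
        apply Submodule.subset_span
        right
        exact ⟨j, by omega, rfl⟩
      · simp [h]
    · exact Submodule.smul_mem _ _ (Submodule.subset_span (by left; rfl))
  -- x ≠ 0
  have hxne : x ≠ 0 := by
    intro h0x
    have hj : ¬ ((⟨k-2, by omega⟩ : Fin (k-1)) : ℕ) + 1 < k - 1 := by simp; omega
    have := hxcoord ⟨k-2, by omega⟩
    rw [h0x] at this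
    simp [hj] at this
    rcases this with h | h
    · omega
    · exact absurd h (ne_of_gt hε)
  -- each coordinate small
  have hcoord : ∀ j : Fin (k-1), |x j| < T := by
    intro j
    rw [hxcoord]
    by_cases h : (j:ℕ)+1 < k-1
    · simp only [h, dif_pos]
      exact hcon ⟨(j:ℕ)+1, by omega⟩ (by simp) (by simp; omega)
    · simp only [h, dif_neg, not_false_iff]
      rw [abs_neg, abs_of_nonneg (by positivity)]
      exact hsmall
  -- norm bound
  have hnorm : ‖x‖^2 < ((k:ℝ)-1) * T^2 := by
    have h1 : ‖x‖^2 = ∑ j : Fin (k-1), |x j|^2 := by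
      rw [EuclideanSpace.norm_eq, Real.sq_sqrt (by positivity)]
      simp [Real.norm_eq_abs]
    rw [h1]
    calc ∑ j : Fin (k-1), |x j|^2 < ∑ _j : Fin (k-1), T^2 := by
          apply Finset.sum_lt_sum_of_nonempty
          · exact Finset.univ_nonempty_iff.mpr ⟨⟨0, by omega⟩⟩
          · intro j _
            exact pow_lt_pow_left₀ (hcoord j) (abs_nonneg _) two_ne_zero
      _ = ((k:ℝ)-1) * T^2 := by
          rw [Finset.sum_const, Finset.card_univ, Fintype.card_fin, nsmul_eq_mul]
          congr 1
          push_cast [Nat.cast_sub (by omega : 1 ≤ k)]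
          ring
  have hmain := hshort x hxL hxne
  -- compute constants
  have hpow : (2:ℝ) ^ (k-2) * ((2 : ℝ) ^ ((1 : ℝ) - (k : ℝ) / 2))^2 = 1 := by
    have h2 : ((2:ℝ) ^ ((1 : ℝ) - (k : ℝ) / 2))^2 = (2:ℝ) ^ ((2:ℝ) - k) := by
      rw [← Real.rpow_natCast ((2:ℝ) ^ ((1 : ℝ) - (k : ℝ) / 2)) 2,
        ← Real.rpow_mul (by norm_num)]
      norm_num
      ring_nf
    have h3 : (2:ℝ) ^ (k-2) = (2:ℝ) ^ ((k:ℝ) - 2) := by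
      rw [← Real.rpow_natCast (2:ℝ) (k-2)]
      congr 1
      push_cast [Nat.cast_sub (by omega : 2 ≤ k)]
      ring
    rw [h2, h3, ← Real.rpow_add (by norm_num)]
    norm_num
  have hT2 : T^2 = ((2 : ℝ) ^ ((1 : ℝ) - (k : ℝ) / 2))^2 * ‖b₁‖^2 / k := by
    rw [hT, div_pow, mul_pow, Real.sq_sqrt (le_of_lt hkR)]
  have hfinal : (2:ℝ) ^ (k-2) * (((k:ℝ)-1) * T^2) = (((k:ℝ)-1)/k) * ‖b₁‖^2 := by
    rw [hT2]
    linear_combination (((k:ℝ)-1) * ‖b₁‖^2 / k) * hpow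
  have : ‖b₁‖^2 < (((k:ℝ)-1)/k) * ‖b₁‖^2 := by
    calc ‖b₁‖^2 ≤ (2:ℝ) ^ (k-2) * ‖x‖^2 := hmain
      _ < (2:ℝ) ^ (k-2) * (((k:ℝ)-1) * T^2) := by
          apply mul_lt_mul_of_pos_left hnorm (by positivity)
      _ = (((k:ℝ)-1)/k) * ‖b₁‖^2 := hfinal
  have hlt1 : ((k:ℝ)-1)/k < 1 := by
    rw [div_lt_one hkR]; linarith
  have hsq : (0:ℝ) < ‖b₁‖^2 := by positivity
  nlinarith [this, hlt1, hsq]
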